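/- Let f be a raked trigonometric polynomial of degree at most 2k-1, not identically zero, and let t_1,...,t_n be distinct roots of f with multiplicities m_1,...,m_n, all lying in an open semicircle of R/2πZ. Then m_1 + ... + m_n ≤ 2k. -/

import Mathlib

open Real Finset

open Polynomial Filter in
private lemma factor_vanish : ∀ (ρ : ℕ) (h ψ v : ℝ → ℝ) (x₀ : ℝ),
    ContDiff ℝ (⊤ : ℕ∞) ψ → ContDiff ℝ (⊤ : ℕ∞) v →
    (h =ᶠ[nhds x₀] fun x => ψ x ^ ρ * v x) → ψ x₀ = 0 → deriv ψ x₀ ≠ 0 →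
    (∀ r ≤ ρ, iteratedDeriv r h x₀ = 0) → v x₀ = 0 := by
  intro ρ
  induction ρ with
  | zero =>
    intro h ψ v x₀ hψ hv hEq hψ0 hψ' hd
    have h0 := hd 0 le_rfl
    rw [iteratedDeriv_zero] at h0
    have := hEq.self_of_nhds
    simp only [pow_zero, one_mul] at this
    rw [← this, h0]
  | succ ρ ih =>
    intro h ψ v x₀ hψ hv hEq hψ0 hψ' hd
    have hψd : Differentiable ℝ ψ := (contDiff_infty_iff_deriv.mp hψ).1
    have hvd : Differentiable ℝ v := (contDiff_infty_iff_deriv.mp hv).1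
    have hψ'c : ContDiff ℝ (⊤ : ℕ∞) (deriv ψ) := (contDiff_infty_iff_deriv.mp hψ).2
    have hv'c : ContDiff ℝ (⊤ : ℕ∞) (deriv v) := (contDiff_infty_iff_deriv.mp hv).2
    set v' : ℝ → ℝ := fun x => ((ρ : ℝ) + 1) * deriv ψ x * v x + ψ x * deriv v x with hv'def
    have hv'smooth : ContDiff ℝ (⊤ : ℕ∞) v' :=
      ((contDiff_const.mul hψ'c).mul hv).add (hψ.mul hv'c)
    have hder : ∀ x : ℝ, deriv (fun y => ψ y ^ (ρ + 1) * v y) x = ψ x ^ ρ * v' x := by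
      intro x
      have h1 : HasDerivAt (fun y => ψ y ^ (ρ + 1) * v y)
          ((((ρ : ℝ) + 1) * ψ x ^ ρ * deriv ψ x) * v x + ψ x ^ (ρ + 1) * deriv v x) x := by
        have hp : HasDerivAt (fun y => ψ y ^ (ρ + 1))
            (((ρ : ℝ) + 1) * ψ x ^ ρ * deriv ψ x) x := by
          have := ((hψd x).hasDerivAt).pow (ρ + 1)
          simp only [Nat.add_sub_cancel, Nat.cast_add, Nat.cast_one] at this; exact this
        exact hp.mul (hvd x).hasDerivAt
      rw [h1.deriv, hv'def]; ring
    have hEq' : deriv h =ᶠ[nhds x₀] fun x => ψ x ^ ρ * v' x := by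
      refine hEq.deriv.trans ?_
      exact Filter.Eventually.of_forall hder
    have hd' : ∀ r ≤ ρ, iteratedDeriv r (deriv h) x₀ = 0 := by
      intro r hr
      rw [← iteratedDeriv_succ']
      exact hd (r + 1) (by omega)
    have := ih (deriv h) ψ v' x₀ hψ hv'smooth hEq' hψ0 hψ' hd'
    rw [hv'def] at this
    simp only [hψ0, zero_mul, add_zero] at this
    rcases mul_eq_zero.mp this with h1 | h2
    · rcases mul_eq_zero.mp h1 with h3 | h4
      · exfalso; have : (ρ : ℝ) + 1 > 0 := by positivity
        linarith
      · exact absurd h4 hψ'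
    · exact h2

open Polynomial in
private noncomputable def rakedCS : ℕ → (ℝ[X] × ℝ[X])
  | 0 => (1, X)
  | (j+1) => ((rakedCS j).1 * (1 - X^2) - 2 * X * (rakedCS j).2,
              (rakedCS j).2 * (1 - X^2) + 2 * X * (rakedCS j).1)

open Polynomial in
private lemma rakedCS_spec (j : ℕ) (s : ℝ) (hs : Real.cos s ≠ 0) :
    Real.cos ((2 * (j:ℝ) + 1) * s) = Real.cos s ^ (2*j+1) * (rakedCS j).1.eval (Real.tan s)
    ∧ Real.sin ((2 * (j:ℝ) + 1) * s) = Real.cos s ^ (2*j+1) * (rakedCS j).2.eval (Real.tan s) := by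
  have htan : Real.tan s = Real.sin s / Real.cos s := Real.tan_eq_sin_div_cos s
  have hc2 : Real.cos (2*s) = Real.cos s ^ 2 * (1 - Real.tan s ^ 2) := by
    rw [Real.cos_two_mul, htan]
    have h1 : Real.sin s ^ 2 + Real.cos s ^ 2 = 1 := Real.sin_sq_add_cos_sq s
    field_simp
    nlinarith [h1]
  have hs2 : Real.sin (2*s) = Real.cos s ^ 2 * (2 * Real.tan s) := by
    rw [Real.sin_two_mul, htan]
    field_simp
  induction j with
  | zero =>
    constructor
    · simp [rakedCS]
    · simp [rakedCS, htan]
      field_simp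
  | succ j ih =>
    obtain ⟨ihc, ihs⟩ := ih
    have harg : (2 * ((j:ℝ)+1) + 1) * s = (2 * (j:ℝ) + 1) * s + 2*s := by ring
    constructor
    · rw [show ((2 * ((j+1:ℕ)):ℝ) + 1) = (2*((j:ℝ)+1)+1) by push_cast; ring, harg,
        Real.cos_add, ihc, ihs, hc2, hs2]
      simp only [rakedCS, Polynomial.eval_sub, Polynomial.eval_mul, Polynomial.eval_add,
        Polynomial.eval_one, Polynomial.eval_pow, Polynomial.eval_X, Polynomial.eval_ofNat]
      ring
    · rw [show ((2 * ((j+1:ℕ)):ℝ) + 1) = (2*((j:ℝ)+1)+1) by push_cast; ring, harg,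
        Real.sin_add, ihc, ihs, hc2, hs2]
      simp only [rakedCS, Polynomial.eval_sub, Polynomial.eval_mul, Polynomial.eval_add,
        Polynomial.eval_one, Polynomial.eval_pow, Polynomial.eval_X, Polynomial.eval_ofNat]
      ring

open Polynomial in
private lemma rakedCS_deg (j : ℕ) :
    (rakedCS j).1.natDegree ≤ 2*j+1 ∧ (rakedCS j).2.natDegree ≤ 2*j+1 := by
  induction j with
  | zero =>
    constructor
    · simp [rakedCS]
    · simp [rakedCS]
  | succ j ih =>
    obtain ⟨ih1, ih2⟩ := ih
    have hX2 : (1 - X^2 : ℝ[X]).natDegree ≤ 2 := by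
      apply le_trans (Polynomial.natDegree_sub_le _ _)
      simp [Polynomial.natDegree_pow]
    have h2X : (2 * X : ℝ[X]).natDegree ≤ 1 := by
      apply le_trans (Polynomial.natDegree_mul_le)
      simp
    constructor
    · apply le_trans (Polynomial.natDegree_sub_le _ _)
      apply max_le
      · exact le_trans Polynomial.natDegree_mul_le (by omega)
      · exact le_trans Polynomial.natDegree_mul_le (by omega)
    · apply le_trans (Polynomial.natDegree_add_le _ _)
      apply max_le
      · exact le_trans Polynomial.natDegree_mul_le (by omega)
      · exact le_trans Polynomial.natDegree_mul_le (by omega)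

open Polynomial in
private lemma poly_trig_eval (Q : ℝ[X]) (d : ℕ) (hd : Q.natDegree ≤ d) (x : ℝ)
    (hx : Real.cos x ≠ 0) :
    Real.cos x ^ d * Q.eval (Real.tan x)
      = ∑ i ∈ Finset.range (d+1), Q.coeff i * Real.sin x ^ i * Real.cos x ^ (d - i) := by
  rw [Polynomial.eval_eq_sum_range' (Nat.lt_succ_of_le hd), Finset.mul_sum]
  apply Finset.sum_congr rfl
  intro i hi
  have hi' : i ≤ d := by simpa [Nat.lt_succ_iff] using hi
  rw [Real.tan_eq_sin_div_cos, div_pow, show d = i + (d - i) by omega, pow_add]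
  field_simp
  simp only [Nat.add_sub_cancel_left]
  ring

open Polynomial in
private lemma sum_rootMultiplicity_le (P : ℝ[X]) (s : Finset ℝ) :
    ∑ x ∈ s, P.rootMultiplicity x ≤ P.natDegree := by
  classical
  have h1 : ∀ x, P.rootMultiplicity x = P.roots.count x := fun x => (Polynomial.count_roots P).symm
  simp_rw [h1]
  have h2 : ∑ x ∈ s, P.roots.count x
      = ∑ x ∈ s.filter (· ∈ P.roots.toFinset), P.roots.count x := by
    refine (Finset.sum_subset (Finset.filter_subset _ _) ?_).symm
    intro x hx hnx
    simp only [Finset.mem_filter, hx, true_and, Multiset.mem_toFinset] at hnx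
    exact Multiset.count_eq_zero.mpr hnx
  rw [h2]
  calc ∑ x ∈ s.filter (· ∈ P.roots.toFinset), P.roots.count x
      ≤ ∑ x ∈ P.roots.toFinset, P.roots.count x := by
        apply Finset.sum_le_sum_of_subset_of_nonneg
        · intro x hx; exact (Finset.mem_filter.mp hx).2
        · intros; exact Nat.zero_le _
    _ = Multiset.card P.roots := Multiset.toFinset_sum_count_eq _
    _ ≤ P.natDegree := Polynomial.card_roots' P

open Polynomial Filter in
private lemma mult_transfer (P : ℝ[X]) (hP : P ≠ 0) (K : ℕ) (hdeg : P.natDegree ≤ K)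
    (g : ℝ → ℝ) (β : ℝ) (U : Set ℝ) (hU : IsOpen U)
    (hUc : ∀ x ∈ U, Real.cos (x - β) ≠ 0)
    (hid : ∀ x ∈ U, g x = Real.cos (x-β) ^ K * P.eval (Real.tan (x-β)))
    (t₀ : ℝ) (ht₀ : t₀ ∈ U) (mult : ℕ)
    (hv : ∀ r < mult, iteratedDeriv r g t₀ = 0) :
    mult ≤ P.rootMultiplicity (Real.tan (t₀ - β)) := by
  classical
  set θ₀ := t₀ - β with hθ₀
  set ξ := Real.tan θ₀ with hξ
  by_contra hcon
  push_neg at hcon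
  set ρ := P.rootMultiplicity ξ with hρ
  set Q := P /ₘ (X - C ξ)^ρ with hQ
  have hQξ : Q.eval ξ ≠ 0 := Polynomial.eval_divByMonic_pow_rootMultiplicity_ne_zero ξ hP
  have hfact : (X - C ξ)^ρ * Q = P := Polynomial.pow_mul_divByMonic_rootMultiplicity_eq P ξ
  have hρK : ρ ≤ K := by
    have h1 : ρ = P.roots.count ξ := (Polynomial.count_roots P).symm
    have h2 : P.roots.count ξ ≤ Multiset.card P.roots := Multiset.count_le_card _ _
    have h3 := Polynomial.card_roots' P
    omega
  have hQdeg : Q.natDegree ≤ K - ρ := by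
    rw [hQ, Polynomial.natDegree_divByMonic _ ((Polynomial.monic_X_sub_C ξ).pow ρ)]
    rw [Polynomial.natDegree_pow, Polynomial.natDegree_X_sub_C]
    omega
  have hcos0 : Real.cos θ₀ ≠ 0 := hUc t₀ ht₀
  set ψ : ℝ → ℝ := fun x => Real.sin (x - β) - ξ * Real.cos (x - β) with hψdef
  set v : ℝ → ℝ := fun x => ∑ i ∈ Finset.range (K - ρ + 1),
      Q.coeff i * Real.sin (x-β) ^ i * Real.cos (x-β) ^ (K - ρ - i) with hvdef
  have hsub : ContDiff ℝ (⊤ : ℕ∞) (fun x : ℝ => x - β) := contDiff_id.sub contDiff_const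
  have hψs : ContDiff ℝ (⊤ : ℕ∞) ψ :=
    (Real.contDiff_sin.comp hsub).sub (contDiff_const.mul (Real.contDiff_cos.comp hsub))
  have hvs : ContDiff ℝ (⊤ : ℕ∞) v := by
    apply ContDiff.sum
    intro i _
    exact (contDiff_const.mul ((Real.contDiff_sin.comp hsub).pow i)).mul
      ((Real.contDiff_cos.comp hsub).pow _)
  have hEq : g =ᶠ[nhds t₀] fun x => ψ x ^ ρ * v x := by
    filter_upwards [hU.mem_nhds ht₀] with x hx
    have hcx : Real.cos (x - β) ≠ 0 := hUc x hx
    have h1 : v x = Real.cos (x-β) ^ (K-ρ) * Q.eval (Real.tan (x-β)) :=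
      (poly_trig_eval Q (K-ρ) hQdeg (x-β) hcx).symm
    have h2 : ψ x = Real.cos (x-β) * (Real.tan (x-β) - ξ) := by
      rw [hψdef, Real.tan_eq_sin_div_cos]
      field_simp
    rw [hid x hx, ← hfact]
    simp only [Polynomial.eval_mul, Polynomial.eval_pow, Polynomial.eval_sub,
      Polynomial.eval_X, Polynomial.eval_C]
    rw [h1, h2, mul_pow, show K = ρ + (K - ρ) by omega, pow_add]
    simp only [Nat.add_sub_cancel_left]
    ring
  have hψ0 : ψ t₀ = 0 := by
    rw [hψdef]
    simp only
    rw [hξ, Real.tan_eq_sin_div_cos, ← hθ₀]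
    field_simp
    simp
  have hψd : HasDerivAt ψ (Real.cos θ₀ + ξ * Real.sin θ₀) t₀ := by
    have h1 : HasDerivAt (fun x : ℝ => x - β) 1 t₀ := (hasDerivAt_id t₀).sub_const β
    have h2 : HasDerivAt (fun x => Real.sin (x - β)) (Real.cos θ₀ * 1) t₀ :=
      (Real.hasDerivAt_sin θ₀).comp (h₂ := Real.sin) t₀ h1
    have h3 : HasDerivAt (fun x => Real.cos (x - β)) (-Real.sin θ₀ * 1) t₀ :=
      (Real.hasDerivAt_cos θ₀).comp (h₂ := Real.cos) t₀ h1
    have := h2.sub ((h3.const_mul ξ))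
    convert this using 1
    all_goals first | rfl | ring
  have hψ' : deriv ψ t₀ ≠ 0 := by
    rw [hψd.deriv, hξ, Real.tan_eq_sin_div_cos]
    have h1 : Real.sin θ₀ ^ 2 + Real.cos θ₀ ^ 2 = 1 := Real.sin_sq_add_cos_sq θ₀
    field_simp
    intro hcontra
    rw [div_eq_zero_iff] at hcontra
    rcases hcontra with h | h
    · nlinarith [h, h1]
    · exact hcos0 h
  have hvan : ∀ r ≤ ρ, iteratedDeriv r g t₀ = 0 := fun r hr => hv r (lt_of_le_of_lt hr hcon)
  have hv0 : v t₀ = 0 := factor_vanish ρ g ψ v t₀ hψs hvs hEq hψ0 hψ' hvan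
  have : v t₀ = Real.cos θ₀ ^ (K-ρ) * Q.eval ξ := (poly_trig_eval Q (K-ρ) hQdeg θ₀ hcos0).symm
  rw [hv0] at this
  exact hQξ (by
    rcases mul_eq_zero.mp this.symm with h | h
    · exact absurd (pow_eq_zero_iff'.mp h).1 hcos0
    · exact h)

private lemma raked_deriv (k : ℕ) (c : ℝ) (a b : ℕ → ℝ) (f : ℝ → ℝ)
    (hf : ∀ t : ℝ, f t = c + ∑ j ∈ Finset.range k,
        (a j * Real.cos ((2 * (j : ℝ) + 1) * t) + b j * Real.sin ((2 * (j : ℝ) + 1) * t)))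
    (x : ℝ) :
    HasDerivAt f (∑ j ∈ Finset.range k,
      (a j * (-Real.sin ((2*(j:ℝ)+1)*x) * (2*(j:ℝ)+1))
        + b j * (Real.cos ((2*(j:ℝ)+1)*x) * (2*(j:ℝ)+1)))) x := by
  have hfe : f = fun t => c + ∑ j ∈ Finset.range k,
      (a j * Real.cos ((2 * (j : ℝ) + 1) * t) + b j * Real.sin ((2 * (j : ℝ) + 1) * t)) :=
    funext hf
  rw [hfe]
  apply HasDerivAt.const_add
  apply HasDerivAt.fun_sum
  intro j _
  have hlin : HasDerivAt (fun t : ℝ => (2*(j:ℝ)+1)*t) (2*(j:ℝ)+1) x := by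
    simpa using (hasDerivAt_id x).const_mul (2*(j:ℝ)+1)
  have hcos : HasDerivAt (fun t => Real.cos ((2*(j:ℝ)+1)*t))
      (-Real.sin ((2*(j:ℝ)+1)*x) * (2*(j:ℝ)+1)) x := (Real.hasDerivAt_cos _).comp x hlin
  have hsin : HasDerivAt (fun t => Real.sin ((2*(j:ℝ)+1)*t))
      (Real.cos ((2*(j:ℝ)+1)*x) * (2*(j:ℝ)+1)) x := (Real.hasDerivAt_sin _).comp x hlin
  exact (hcos.const_mul (a j)).add (hsin.const_mul (b j))

private lemma raked_antipode (k : ℕ) (c : ℝ) (a b : ℕ → ℝ) (f : ℝ → ℝ)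
    (hf : ∀ t : ℝ, f t = c + ∑ j ∈ Finset.range k,
        (a j * Real.cos ((2 * (j : ℝ) + 1) * t) + b j * Real.sin ((2 * (j : ℝ) + 1) * t)))
    (x : ℝ) : f x + f (x + π) = 2*c := by
  rw [hf x, hf (x + π)]
  have hterm : ∀ j ∈ Finset.range k,
      ((a j * Real.cos ((2*(j:ℝ)+1)*x) + b j * Real.sin ((2*(j:ℝ)+1)*x))
      + (a j * Real.cos ((2*(j:ℝ)+1)*(x+π)) + b j * Real.sin ((2*(j:ℝ)+1)*(x+π)))) = 0 := by
    intro j _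
    have harg : (2*(j:ℝ)+1)*(x+π) = ((2*(j:ℝ)+1)*x + π) + ((j:ℤ):ℝ)*(2*π) := by
      push_cast; ring
    rw [harg, Real.cos_add_int_mul_two_pi, Real.sin_add_int_mul_two_pi,
      Real.cos_add_pi, Real.sin_add_pi]
    ring
  have hsum : ∑ j ∈ Finset.range k,
      ((a j * Real.cos ((2*(j:ℝ)+1)*x) + b j * Real.sin ((2*(j:ℝ)+1)*x))
      + (a j * Real.cos ((2*(j:ℝ)+1)*(x+π)) + b j * Real.sin ((2*(j:ℝ)+1)*(x+π)))) = 0 :=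
    Finset.sum_eq_zero hterm
  rw [Finset.sum_add_distrib] at hsum
  linarith [hsum]

private lemma raked_periodic (k : ℕ) (c : ℝ) (a b : ℕ → ℝ) (f : ℝ → ℝ)
    (hf : ∀ t : ℝ, f t = c + ∑ j ∈ Finset.range k,
        (a j * Real.cos ((2 * (j : ℝ) + 1) * t) + b j * Real.sin ((2 * (j : ℝ) + 1) * t)))
    (x : ℝ) (N : ℤ) : f (x + N*(2*π)) = f x := by
  rw [hf x, hf _]
  congr 1
  apply Finset.sum_congr rfl
  intro j _
  have harg : (2*(j:ℝ)+1)*(x + (N:ℝ)*(2*π))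
      = (2*(j:ℝ)+1)*x + (((2*j+1 : ℕ)*N : ℤ):ℝ)*(2*π) := by
    push_cast; ring
  rw [harg, Real.cos_add_int_mul_two_pi, Real.sin_add_int_mul_two_pi]
open Polynomial Filter in
theorem raked_semicircle_roots_le (k n : ℕ) (hk : 1 ≤ k)
    (c : ℝ) (a b : ℕ → ℝ) (f : ℝ → ℝ)
    (hf : ∀ t : ℝ, f t = c + ∑ j ∈ Finset.range k,
        (a j * Real.cos ((2 * (j : ℝ) + 1) * t) + b j * Real.sin ((2 * (j : ℝ) + 1) * t)))
    (hne : ∃ t : ℝ, f t ≠ 0)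
    (α : ℝ) (t : Fin n → ℝ) (ht : ∀ i, t i ∈ Set.Ioo α (α + Real.pi))
    (htinj : Function.Injective t)
    (m : Fin n → ℕ) (hm : ∀ i, 1 ≤ m i)
    (hroot : ∀ i, (∀ r < m i, iteratedDeriv r f (t i) = 0) ∧
      iteratedDeriv (m i) f (t i) ≠ 0) :
    ∑ i, m i ≤ 2 * k := by
  classical
  rcases Nat.eq_zero_or_pos n with hn0 | hn1
  · subst hn0; simp
  set β : ℝ := α + π/2 with hβ
  set U : Set ℝ := Set.Ioo α (α + π) with hUdef
  set D : ℝ → ℝ := fun x => ∑ j ∈ Finset.range k,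
      (a j * (-Real.sin ((2*(j:ℝ)+1)*x) * (2*(j:ℝ)+1))
        + b j * (Real.cos ((2*(j:ℝ)+1)*x) * (2*(j:ℝ)+1))) with hDdef
  have hD : ∀ x, HasDerivAt f (D x) x := fun x => raked_deriv k c a b f hf x
  have hdf : ∀ x, deriv f x = D x := fun x => (hD x).deriv
  have hdiff : Differentiable ℝ f := fun x => (hD x).differentiableAt
  have hcont : Continuous f := hdiff.continuous
  set A : ℕ → ℝ := fun j => -((2*(j:ℝ)+1) * (b j * Real.sin ((2*(j:ℝ)+1)*β)
      + a j * Real.cos ((2*(j:ℝ)+1)*β))) with hA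
  set B : ℕ → ℝ := fun j => (2*(j:ℝ)+1) * (b j * Real.cos ((2*(j:ℝ)+1)*β)
      - a j * Real.sin ((2*(j:ℝ)+1)*β)) with hB
  have hDshift : ∀ x, D x = ∑ j ∈ Finset.range k,
      (B j * Real.cos ((2*(j:ℝ)+1)*(x-β)) + A j * Real.sin ((2*(j:ℝ)+1)*(x-β))) := by
    intro x
    rw [hDdef]
    apply Finset.sum_congr rfl
    intro j _
    have harg : (2*(j:ℝ)+1)*x = (2*(j:ℝ)+1)*(x-β) + (2*(j:ℝ)+1)*β := by ring
    rw [harg, Real.cos_add, Real.sin_add, hA, hB]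
    ring
  set P : ℝ[X] := ∑ j ∈ Finset.range k,
      (1 + X^2 : ℝ[X])^(k-1-j) * (Polynomial.C (B j) * (rakedCS j).1
        + Polynomial.C (A j) * (rakedCS j).2) with hP
  have hPdeg : P.natDegree ≤ 2*k-1 := by
    rw [hP]
    apply Polynomial.natDegree_sum_le_of_forall_le
    intro j hj
    have hjk : j < k := Finset.mem_range.mp hj
    have h1 : (1 + X^2 : ℝ[X]).natDegree ≤ 2 := by
      apply le_trans (Polynomial.natDegree_add_le _ _)
      simp [Polynomial.natDegree_pow]
    refine le_trans Polynomial.natDegree_mul_le ?_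
    have h2 : ((1 + X^2 : ℝ[X])^(k-1-j)).natDegree ≤ (k-1-j) * 2 :=
      le_trans Polynomial.natDegree_pow_le (by exact Nat.mul_le_mul_left _ h1)
    have h3 : (Polynomial.C (B j) * (rakedCS j).1
        + Polynomial.C (A j) * (rakedCS j).2).natDegree ≤ 2*j+1 := by
      apply le_trans (Polynomial.natDegree_add_le _ _)
      apply max_le
      · exact le_trans (Polynomial.natDegree_C_mul_le _ _) (rakedCS_deg j).1
      · exact le_trans (Polynomial.natDegree_C_mul_le _ _) (rakedCS_deg j).2
    omega
  have hUc : ∀ x ∈ U, Real.cos (x - β) ≠ 0 := by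
    intro x hx
    rw [hUdef] at hx
    have hmem : x - β ∈ Set.Ioo (-(π/2)) (π/2) := by
      constructor
      · rw [hβ]; have := hx.1; linarith
      · rw [hβ]; have := hx.2; linarith
    exact (Real.cos_pos_of_mem_Ioo hmem).ne'
  have hmain : ∀ x ∈ U, deriv f x = Real.cos (x-β) ^ (2*k-1) * P.eval (Real.tan (x-β)) := by
    intro x hx
    have hc : Real.cos (x-β) ≠ 0 := hUc x hx
    rw [hdf, hDshift, hP]
    rw [Polynomial.eval_finset_sum, Finset.mul_sum]
    apply Finset.sum_congr rfl
    intro j hj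
    have hjk : j < k := Finset.mem_range.mp hj
    rw [(rakedCS_spec j (x-β) hc).1, (rakedCS_spec j (x-β) hc).2]
    simp only [Polynomial.eval_mul, Polynomial.eval_pow, Polynomial.eval_add,
      Polynomial.eval_one, Polynomial.eval_X, Polynomial.eval_C]
    have h1 : Real.cos (x-β)^2 * (1 + Real.tan (x-β)^2) = 1 := by
      rw [Real.tan_eq_sin_div_cos]
      field_simp
      rw [add_comm, Real.sin_sq_add_cos_sq]
    have key : Real.cos (x-β) ^ (2*k-1) * (1 + Real.tan (x-β)^2)^(k-1-j)
        = Real.cos (x-β) ^ (2*j+1) := by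
      calc Real.cos (x-β) ^ (2*k-1) * (1 + Real.tan (x-β)^2)^(k-1-j)
          = Real.cos (x-β) ^ (2*j+1)
            * ((Real.cos (x-β)^2 * (1 + Real.tan (x-β)^2))^(k-1-j)) := by
            rw [mul_pow, ← pow_mul, show 2*k-1 = 2*j+1 + 2*(k-1-j) by omega, pow_add]
            ring
        _ = Real.cos (x-β) ^ (2*j+1) := by rw [h1, one_pow, mul_one]
    linear_combination (-(B j * Polynomial.eval (Real.tan (x-β)) (rakedCS j).1
      + A j * Polynomial.eval (Real.tan (x-β)) (rakedCS j).2)) * key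
  -- the first root
  have hf0' : ∀ i : Fin n, f (t i) = 0 := by
    intro i
    have h0 := (hroot i).1 0 (hm i)
    rwa [iteratedDeriv_zero] at h0
  -- Case P = 0 : f vanishes identically, contradiction
  by_cases hPzero : P = 0
  · exfalso
    have hd0 : ∀ x ∈ U, deriv f x = 0 := by
      intro x hx
      rw [hmain x hx, hPzero]
      simp
    set i0 : Fin n := ⟨0, hn1⟩ with hi0
    have ht0U : t i0 ∈ U := ht i0
    have hzero : ∀ x ∈ U, f x = 0 := by
      intro x hx
      rcases lt_trichotomy x (t i0) with h | h | h
      · obtain ⟨cc, hcc, hsl⟩ := exists_deriv_eq_slope f h hcont.continuousOn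
          (hdiff.differentiableOn)
        have hccU : cc ∈ U := by
          constructor
          · have := hx.1; have := hcc.1; linarith
          · have := ht0U.2; have := hcc.2; linarith
        rw [hd0 cc hccU] at hsl
        have h2 := hsl.symm
        rw [div_eq_iff (by intro h0; apply absurd h0; intro h0'; linarith : t i0 - x ≠ 0)] at h2
        have := hf0' i0
        linarith [h2]
      · rw [h]; exact hf0' i0
      · obtain ⟨cc, hcc, hsl⟩ := exists_deriv_eq_slope f h hcont.continuousOn
          (hdiff.differentiableOn)
        have hccU : cc ∈ U := by
          constructor
          · have := ht0U.1; have := hcc.1; linarith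
          · have := hx.2; have := hcc.2; linarith
        rw [hd0 cc hccU] at hsl
        have h2 := hsl.symm
        rw [div_eq_iff (by intro h0; apply absurd h0; intro h0'; linarith : x - t i0 ≠ 0)] at h2
        have := hf0' i0
        linarith [h2]
    have hαπ : α < α + π := by linarith [Real.pi_pos]
    have hend : ∀ p : ℝ, (nhdsWithin p U).NeBot → f p = 0 := by
      intro p hnb
      have h1 : Filter.Tendsto f (nhdsWithin p U) (nhds (f p)) :=
        (hcont.continuousAt).continuousWithinAt.tendsto
      have h2 : Filter.Tendsto f (nhdsWithin p U) (nhds 0) := by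
        apply Filter.Tendsto.congr' _ tendsto_const_nhds
        filter_upwards [eventually_mem_nhdsWithin] with x hx
        exact (hzero x hx).symm
      exact tendsto_nhds_unique h1 h2
    have hfα : f α = 0 := hend α (left_nhdsWithin_Ioo_neBot hαπ)
    have hfαπ : f (α + π) = 0 := hend (α + π) (right_nhdsWithin_Ioo_neBot hαπ)
    have hc0 : c = 0 := by
      have := raked_antipode k c a b f hf α
      rw [hfα, hfαπ] at this
      linarith
    have hIcc1 : ∀ x ∈ Set.Icc α (α + π), f x = 0 := by
      intro x hx
      rcases eq_or_lt_of_le hx.1 with h | h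
      · rw [← h]; exact hfα
      rcases eq_or_lt_of_le hx.2 with h' | h'
      · rw [h']; exact hfαπ
      exact hzero x ⟨h, h'⟩
    have hIcc2 : ∀ x ∈ Set.Icc (α + π) (α + 2*π), f x = 0 := by
      intro x hx
      have h1 := raked_antipode k c a b f hf (x - π)
      have h2 : f (x - π) = 0 := hIcc1 (x - π) ⟨by linarith [hx.1], by linarith [hx.2]⟩
      rw [h2, hc0] at h1
      simp only [sub_add_cancel] at h1
      linarith
    obtain ⟨y, hy⟩ := hne
    apply hy
    have h2π : (0:ℝ) < 2*π := by linarith [Real.pi_pos]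
    set N := ⌊(y - α)/(2*π)⌋ with hN
    have hNle : (N:ℝ) ≤ (y-α)/(2*π) := Int.floor_le _
    have hNgt : (y-α)/(2*π) - 1 < (N:ℝ) := Int.sub_one_lt_floor _
    set x := y - N*(2*π) with hxdef
    have hx1 : α ≤ x := by
      have := (le_div_iff₀ h2π).mp hNle
      rw [hxdef]; linarith
    have hx2 : x ≤ α + 2*π := by
      have : (y-α)/(2*π) < (N:ℝ) + 1 := by linarith
      have := (div_lt_iff₀ h2π).mp this
      rw [hxdef]; linarith
    have hyx : f y = f x := by
      have := raked_periodic k c a b f hf x N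
      rw [show x + (N:ℝ)*(2*π) = y by rw [hxdef]; ring] at this
      exact this
    rw [hyx]
    rcases le_or_gt x (α + π) with h | h
    · exact hIcc1 x ⟨hx1, h⟩
    · exact hIcc2 x ⟨h.le, hx2⟩
  -- Case P ≠ 0 : counting roots
  · set T : Finset ℝ := Finset.image t Finset.univ with hT
    have hTcard : T.card = n := by
      rw [hT, Finset.card_image_of_injective _ htinj, Finset.card_univ, Fintype.card_fin]
    set e := T.orderIsoOfFin hTcard with he
    set u : Fin n → ℝ := fun i => (e i : ℝ) with hu
    have humono : StrictMono u := fun i j hij => Subtype.coe_lt_coe.mpr (e.strictMono hij)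
    have hex : ∀ i, ∃ j, t j = u i := by
      intro i
      have h := (e i).2
      obtain ⟨j, _, hj⟩ := Finset.mem_image.mp h
      exact ⟨j, hj⟩
    choose φ hφ using hex
    have hφinj : Function.Injective φ := by
      intro i j hij
      apply humono.injective
      rw [← hφ i, ← hφ j, hij]
    have hφbij : Function.Bijective φ := Finite.injective_iff_bijective.mp hφinj
    set μ : Fin n → ℕ := fun i => m (φ i) with hμ
    have hμ1 : ∀ i, 1 ≤ μ i := fun i => hm (φ i)
    have hsum : ∑ i, μ i = ∑ i, m i := Equiv.sum_comp (Equiv.ofBijective φ hφbij) m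
    have huU : ∀ i, u i ∈ U := by
      intro i
      rw [← hφ i]
      exact ht (φ i)
    have hf0 : ∀ i : Fin n, f (u i) = 0 := by
      intro i
      rw [← hφ i]
      exact hf0' (φ i)
    -- root multiplicity at the u i
    have hgvan : ∀ i : Fin n, ∀ r < μ i - 1, iteratedDeriv r (deriv f) (u i) = 0 := by
      intro i r hr
      rw [← iteratedDeriv_succ']
      have hr' : r < μ i - 1 := hr
      have hμi : μ i = m (φ i) := rfl
      have := (hroot (φ i)).1 (r+1) (by omega)
      rwa [hφ i] at this
    have hmult1 : ∀ i : Fin n, μ i - 1 ≤ P.rootMultiplicity (Real.tan (u i - β)) :=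
      fun i => mult_transfer P hPzero (2*k-1) hPdeg (deriv f) β U isOpen_Ioo hUc hmain
        (u i) (huU i) (μ i - 1) (hgvan i)
    -- Rolle points
    have hroll : ∀ (i : ℕ) (hi : i + 1 < n), ∃ y,
        y ∈ Set.Ioo (u ⟨i, by omega⟩) (u ⟨i+1, hi⟩) ∧ deriv f y = 0 := by
      intro i hi
      have hlt : u ⟨i, by omega⟩ < u ⟨i+1, hi⟩ := humono (by simp [Fin.lt_def])
      obtain ⟨y, hy, hy'⟩ := exists_deriv_eq_zero hlt hcont.continuousOn
        (by rw [hf0 ⟨i, by omega⟩, hf0 ⟨i+1, hi⟩])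
      exact ⟨y, hy, hy'⟩
    choose z hz1 hz2 using hroll
    set w : Fin (n-1) → ℝ := fun j => z j.val (by have := j.isLt; omega) with hw
    have hwlb : ∀ j : Fin (n-1), u ⟨j.val, by have := j.isLt; omega⟩ < w j :=
      fun j => (hz1 j.val (by have := j.isLt; omega)).1
    have hwub : ∀ j : Fin (n-1), w j < u ⟨j.val+1, by have := j.isLt; omega⟩ :=
      fun j => (hz1 j.val (by have := j.isLt; omega)).2
    have hwU : ∀ j : Fin (n-1), w j ∈ U := by
      intro j
      constructor
      · have h1 := (huU ⟨j.val, by have := j.isLt; omega⟩).1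
        have h2 := hwlb j
        linarith
      · have h1 := (huU ⟨j.val+1, by have := j.isLt; omega⟩).2
        have h2 := hwub j
        linarith
    have hmult2 : ∀ j : Fin (n-1), 1 ≤ P.rootMultiplicity (Real.tan (w j - β)) := by
      intro j
      apply (Polynomial.rootMultiplicity_pos hPzero).mpr
      have h1 := hmain (w j) (hwU j)
      rw [hz2 j.val (by have := j.isLt; omega)] at h1
      have hcw : Real.cos (w j - β) ≠ 0 := hUc (w j) (hwU j)
      rcases mul_eq_zero.mp h1.symm with h | h
      · exact absurd (pow_eq_zero_iff'.mp h).1 hcw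
      · exact h
    -- distinctness of the tangent values
    have hζmono : ∀ p ∈ U, ∀ q ∈ U, p < q → Real.tan (p - β) < Real.tan (q - β) := by
      intro p hp q hq hpq
      apply Real.strictMonoOn_tan
      · constructor
        · rw [hβ]; have := hp.1; linarith
        · rw [hβ]; have := hp.2; linarith
      · constructor
        · rw [hβ]; have := hq.1; linarith
        · rw [hβ]; have := hq.2; linarith
      · linarith
    have hζne : ∀ p ∈ U, ∀ q ∈ U, p ≠ q → Real.tan (p - β) ≠ Real.tan (q - β) := by
      intro p hp q hq hpq
      rcases lt_or_gt_of_ne hpq with h | h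
      · exact (hζmono p hp q hq h).ne
      · exact (hζmono q hq p hp h).ne'
    set S₁ : Finset ℝ := Finset.image (fun i : Fin n => Real.tan (u i - β)) Finset.univ with hS₁
    set S₂ : Finset ℝ := Finset.image (fun j : Fin (n-1) => Real.tan (w j - β))
      Finset.univ with hS₂
    have hinj1 : ∀ x ∈ (Finset.univ : Finset (Fin n)), ∀ y ∈ (Finset.univ : Finset (Fin n)),
        Real.tan (u x - β) = Real.tan (u y - β) → x = y := by
      intro i _ j _ hij
      by_contra hne'
      exact hζne (u i) (huU i) (u j) (huU j) (fun h => hne' (humono.injective h)) hij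
    have hwmono : StrictMono w := by
      intro i j hij
      have h1 : w i < u ⟨i.val+1, by have := i.isLt; omega⟩ := hwub i
      have h2 : u (⟨i.val+1, by have := i.isLt; omega⟩ : Fin n)
          ≤ u ⟨j.val, by have := j.isLt; omega⟩ := by
        apply humono.monotone
        simp only [Fin.le_def]
        exact hij
      have h3 : u (⟨j.val, by have := j.isLt; omega⟩ : Fin n) < w j := hwlb j
      linarith
    have hinj2 : ∀ x ∈ (Finset.univ : Finset (Fin (n-1))),
        ∀ y ∈ (Finset.univ : Finset (Fin (n-1))),
        Real.tan (w x - β) = Real.tan (w y - β) → x = y := by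
      intro i _ j _ hij
      by_contra hne'
      exact hζne (w i) (hwU i) (w j) (hwU j) (fun h => hne' (hwmono.injective h)) hij
    have huw : ∀ (i : Fin n) (j : Fin (n-1)), u i ≠ w j := by
      intro i j
      rcases le_or_gt i.val j.val with h | h
      · have h1 : u i ≤ u ⟨j.val, by have := j.isLt; omega⟩ :=
          humono.monotone (by simp only [Fin.le_def]; exact h)
        have h2 := hwlb j
        intro hc; rw [hc] at h1; linarith
      · have h1 : u (⟨j.val+1, by have := j.isLt; omega⟩ : Fin n) ≤ u i :=
          humono.monotone (by simp only [Fin.le_def]; exact h)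
        have h2 := hwub j
        intro hc; rw [hc] at h1; linarith
    have hdisj : Disjoint S₁ S₂ := by
      rw [Finset.disjoint_left]
      intro x hx1 hx2
      rw [hS₁, Finset.mem_image] at hx1
      rw [hS₂, Finset.mem_image] at hx2
      obtain ⟨i, _, hi⟩ := hx1
      obtain ⟨j, _, hj⟩ := hx2
      exact hζne (u i) (huU i) (w j) (hwU j) (huw i j) (by rw [hi, hj])
    have hSsum := sum_rootMultiplicity_le P (S₁ ∪ S₂)
    rw [Finset.sum_union hdisj, hS₁, hS₂, Finset.sum_image hinj1, Finset.sum_image hinj2]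
      at hSsum
    have hA1 : ∑ i : Fin n, (μ i - 1) ≤ ∑ i : Fin n, P.rootMultiplicity (Real.tan (u i - β)) :=
      Finset.sum_le_sum (fun i _ => hmult1 i)
    have hA2 : (n - 1 : ℕ) ≤ ∑ j : Fin (n-1), P.rootMultiplicity (Real.tan (w j - β)) := by
      calc (n - 1 : ℕ) = ∑ _j : Fin (n-1), 1 := by
            simp
        _ ≤ _ := Finset.sum_le_sum (fun j _ => hmult2 j)
    have hB1 : ∑ i : Fin n, μ i = ∑ i : Fin n, (μ i - 1) + n := by
      calc ∑ i : Fin n, μ i = ∑ i : Fin n, ((μ i - 1) + 1) := by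
            apply Finset.sum_congr rfl
            intro i _
            have := hμ1 i
            omega
        _ = ∑ i : Fin n, (μ i - 1) + ∑ _i : Fin n, 1 := Finset.sum_add_distrib
        _ = ∑ i : Fin n, (μ i - 1) + n := by simp
    have hfinal : ∑ i : Fin n, (μ i - 1) + (n - 1) ≤ P.natDegree := by
      calc ∑ i : Fin n, (μ i - 1) + (n - 1)
          ≤ ∑ i : Fin n, P.rootMultiplicity (Real.tan (u i - β))
            + ∑ j : Fin (n-1), P.rootMultiplicity (Real.tan (w j - β)) :=
            add_le_add hA1 hA2
        _ ≤ P.natDegree := hSsum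
    rw [← hsum]
    omega
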